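/- arXiv:1404.2060 — 3 statements merged into one kernel-verified Lean document; each statement's English description precedes it below -/
import Mathlib

section
/- Consider a random walk in a random environment on ℤ^d, d ≥ 2, whose environment law 𝐏 is i.i.d. and elliptic. If condition (H)_1^c holds, i.e. 𝔼_x[T^ex_𝔥] < ∞ for all x ∈ 𝔥, then for every unit hypercube H of ℤ^d containing 0 one has 𝐄[ min_{y∈H} (Q^H_y)^{−1} ] < ∞. -/
open MeasureTheory ProbabilityTheory Filter Topology ENNReal
open scoped Classical

noncomputable section

namespace RWRE

/-- Sites of `ℤ^d`. -/
abbrev V (d : ℕ) := Fin d → ℤ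

/-- The `2d` directions: `(i, true)` is `e_i`, `(i, false)` is `-e_i`. -/
abbrev Dir (d : ℕ) := Fin d × Bool

/-- Trajectory space. -/
abbrev Traj (d : ℕ) := ℕ → V d

/-- The unit vector associated to a direction. -/
def dirVec (d : ℕ) (e : Dir d) : V d := fun i => if i = e.1 then (if e.2 then 1 else -1) else 0

/-- Probability vectors on the set of directions. -/
abbrev ProbVec (d : ℕ) := {p : Dir d → ℝ // (∀ e, 0 ≤ p e) ∧ ∑ e, p e = 1}

/-- Environments. -/
abbrev Env (d : ℕ) := V d → ProbVec d

/-- Transition probability at site `x` in direction `e`. -/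
def pmf {d : ℕ} (ω : Env d) (x : V d) (e : Dir d) : ℝ := (ω x).1 e

/-- Transition probability from `x` to `y` (zero if `y` is not a neighbour of `x`). -/
def stepProb {d : ℕ} (ω : Env d) (x y : V d) : ℝ :=
  ∑ e : Dir d, if y = x + dirVec d e then pmf ω x e else 0

/-- `P` is the family of quenched laws: `P ω x` is the law of the Markov chain started at `x`
with transition probabilities given by `ω`. -/
def IsQuenched {d : ℕ} (P : Env d → V d → Measure (Traj d)) : Prop :=
  (∀ ω x, IsProbabilityMeasure (P ω x)) ∧
  (∀ x, Measurable fun ω => P ω x) ∧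
  ∀ ω x (n : ℕ) (γ : ℕ → V d),
    (P ω x {X | ∀ k ≤ n, X k = γ k}).toReal
      = (if γ 0 = x then 1 else 0) * ∏ k ∈ Finset.range n, stepProb ω (γ k) (γ (k + 1))

/-- The annealed law `ℙ_x`. -/
def annealed {d : ℕ} (P : Env d → V d → Measure (Traj d)) (Pr : Measure (Env d)) (x : V d) :
    Measure (Traj d) := Pr.bind fun ω => P ω x

/-- The environment law is i.i.d. -/
def IsIID {d : ℕ} (Pr : Measure (Env d)) : Prop :=
  IsProbabilityMeasure Pr ∧
  iIndepFun (fun x (ω : Env d) => ω x) Pr ∧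
  ∀ x : V d, Pr.map (fun ω => ω x) = Pr.map (fun ω => ω 0)

/-- Ellipticity. -/
def Elliptic {d : ℕ} (Pr : Measure (Env d)) : Prop :=
  ∀ᵐ ω ∂Pr, ∀ x e, 0 < pmf ω x e

/-- Exit time of a set. -/
def exitTime {d : ℕ} (A : Set (V d)) (X : Traj d) : ℕ∞ :=
  ⨅ (n : ℕ) (_ : X n ∉ A), (n : ℕ∞)

/-- Hitting time of a set. -/
def hitTime {d : ℕ} (A : Set (V d)) (X : Traj d) : ℕ∞ :=
  ⨅ (n : ℕ) (_ : X n ∈ A), (n : ℕ∞)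

/-- Positive hitting time of a set. -/
def retTime {d : ℕ} (A : Set (V d)) (X : Traj d) : ℕ∞ :=
  ⨅ (n : ℕ) (_ : 1 ≤ n ∧ X n ∈ A), (n : ℕ∞)

/-- Scalar product of `ℓ ∈ ℝ^d` with a site of `ℤ^d`. -/
def dot {d : ℕ} (ℓ : Fin d → ℝ) (x : V d) : ℝ := ∑ i, ℓ i * (x i : ℝ)

/-- `ℓ` belongs to the unit sphere `S^{d-1}`. -/
def UnitVec {d : ℕ} (ℓ : Fin d → ℝ) : Prop := ∑ i, ℓ i ^ 2 = 1

/-- The walk, under the annealed law, is transient in the direction `ℓ`. -/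
def Transient {d : ℕ} (P : Env d → V d → Measure (Traj d)) (Pr : Measure (Env d))
    (ℓ : Fin d → ℝ) : Prop :=
  annealed P Pr 0 {X | Tendsto (fun n => dot ℓ (X n)) atTop atTop} = 1

/-- The trajectory rescaled to `ℝ^d`. -/
def toR {d : ℕ} (x : V d) : Fin d → ℝ := fun i => (x i : ℝ)

/-- The unit hypercube based at `x`. -/
def cube {d : ℕ} (x : V d) : Set (V d) := {y | ∀ i, y i = x i ∨ y i = x i + 1}

/-- The corners of the unit hypercube based at `0`, as a finite set. -/
def cubePts (d : ℕ) : Finset (V d) :=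
  Finset.univ.image fun s : Fin d → Bool => (fun i => if s i then 1 else 0 : V d)

/-- The (outer) boundary of a set of sites. -/
def bdry {d : ℕ} (A : Set (V d)) : Set (V d) :=
  {z | z ∉ A ∧ ∃ w ∈ A, ∑ i, |z i - w i| = 1}

/-- The boundary points adjacent to `y`. -/
def bdryAt {d : ℕ} (y : V d) (A : Set (V d)) : Set (V d) :=
  {z | z ∈ bdry A ∧ ∑ i, |z i - y i| = 1}

/-- `Q^C_y`: the largest transition probability leading out of `C` from `y`. -/
def Qmax {d : ℕ} (ω : Env d) (C : Set (V d)) (y : V d) : ℝ :=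
  ⨆ e : Dir d, if y + dirVec d e ∈ bdryAt y C then pmf ω y e else 0

/-- The event that the walk exits `C` through a neighbour of `y` before returning to `x`. -/
def exitVia {d : ℕ} (C : Set (V d)) (x y : V d) : Set (Traj d) :=
  {X | ∃ n : ℕ, X n ∈ bdryAt y C ∧ (∀ m < n, X m ∉ bdry C) ∧ ∀ m, 1 ≤ m → m < n → X m ≠ x}

/-- `Q̃^C_{x,y}`: the quenched probability, starting from `x`, of exiting `C` through a
neighbour of `y` before returning to `x`. -/
def Qtilde {d : ℕ} (P : Env d → V d → Measure (Traj d)) (ω : Env d) (C : Set (V d))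
    (x y : V d) : ℝ := ((P ω x) (exitVia C x y)).toReal

/-- A marked Markovian hypercube: a unit hypercube containing `0` discovered in a Markovian
fashion by revealing sites `f 0 = 0, f 1, ...` one at a time, together with marks. -/
structure MMH (d : ℕ) where
  /-- The successively revealed sites. -/
  f : ℕ → Env d → V d
  /-- The marks, indexed by the corners of the unit hypercube at `0`. -/
  mark : V d → Env d → ℝ
  /-- The base point `x₀(ω)` of the revealed hypercube. -/
  x0 : Env d → V d
  f_zero : ∀ ω, f 0 ω = 0
  f_meas : ∀ i, Measurable (f i)
  f_local : ∀ i (ω ω' : Env d), (∀ j ≤ i, ω' (f j ω) = ω (f j ω)) → f (i + 1) ω' = f (i + 1) ω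
  f_adj : ∀ i ω, i + 1 < 2 ^ d → f (i + 1) ω ∈ bdry {y | ∃ j ≤ i, f j ω = y}
  x0_cube : ∀ ω, cube (x0 ω) = {y | ∃ j < 2 ^ d, f j ω = y}
  mark_nonneg : ∀ x ω, 0 ≤ mark x ω
  mark_meas : ∀ x, Measurable (mark x)
  mark_local : ∀ x (ω ω' : Env d), (∀ y ∈ cube (x0 ω), ω' y = ω y) → mark x ω' = mark x ω

/-- Condition `(K)_α` with explicit constant `ε` (parts (1), (2), (3)). -/
def CondKE {d : ℕ} (P : Env d → V d → Measure (Traj d)) (Pr : Measure (Env d))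
    (α ε : ℝ) : Prop :=
  ∃ γ : V d → ℝ, (∀ x, 0 ≤ γ x) ∧
    (∀ x ∈ cubePts d, ∫⁻ ω, (ENNReal.ofReal (Qmax ω (cube 0) x)) ^ (-(γ x)) ∂Pr < ⊤) ∧
    ∃ H : MMH d,
      (∫⁻ ω, ∏ x ∈ cubePts d,
          (ENNReal.ofReal (Qtilde P ω (cube (H.x0 ω)) 0 (H.x0 ω + x))) ^ (-(H.mark x ω)) ∂Pr
        < ⊤) ∧
      ∀ᵐ ω ∂Pr, α + ε ≤ ∑ x ∈ cubePts d, min (γ x) (H.mark x ω)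

/-- Condition `(K)_α`. -/
def CondK {d : ℕ} (P : Env d → V d → Measure (Traj d)) (Pr : Measure (Env d)) (α : ℝ) : Prop :=
  ∃ ε > (0 : ℝ), CondKE P Pr α ε

/-- Condition `(E)_0`. -/
def CondE0 {d : ℕ} (Pr : Measure (Env d)) : Prop :=
  ∀ e : Dir d, ∃ η > (0 : ℝ), ∫⁻ ω, (ENNReal.ofReal (pmf ω 0 e)) ^ (-η) ∂Pr < ⊤

/-- The coordinates of `z ∈ ℤ^d` in the rotated frame `R`. -/
def tiltCoord {d : ℕ} (R : EuclideanSpace ℝ (Fin d) ≃ₗᵢ[ℝ] EuclideanSpace ℝ (Fin d))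
    (z : V d) : Fin d → ℝ :=
  WithLp.equiv 2 (Fin d → ℝ) (R.symm ((WithLp.equiv 2 (Fin d → ℝ)).symm fun j => (z j : ℝ)))

/-- The box `B^ℓ_{L,L',L̃}`: the image under the rotation `R` of
`(-L',L) × (-L̃,L̃)^{d-1}`, intersected with `ℤ^d`. -/
def polyBox {d : ℕ} (R : EuclideanSpace ℝ (Fin d) ≃ₗᵢ[ℝ] EuclideanSpace ℝ (Fin d))
    (L L' Lt : ℝ) : Set (V d) :=
  {z | (∀ i : Fin d, (i : ℕ) = 0 → tiltCoord R z i ∈ Set.Ioo (-L') L) ∧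
       ∀ i : Fin d, (i : ℕ) ≠ 0 → tiltCoord R z i ∈ Set.Ioo (-Lt) Lt}

/-- The first coordinate vector of `ℝ^d` as an element of Euclidean space. -/
def euc1 (d : ℕ) : EuclideanSpace ℝ (Fin d) :=
  (WithLp.equiv 2 (Fin d → ℝ)).symm fun i => if (i : ℕ) = 0 then 1 else 0

/-- The polynomial condition `(P)^ℓ_M`. -/
def CondP {d : ℕ} (P : Env d → V d → Measure (Traj d)) (Pr : Measure (Env d))
    (ℓ : Fin d → ℝ) (M : ℝ) : Prop :=
  ∃ R : EuclideanSpace ℝ (Fin d) ≃ₗᵢ[ℝ] EuclideanSpace ℝ (Fin d),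
    R (euc1 d) = (WithLp.equiv 2 (Fin d → ℝ)).symm ℓ ∧
    ∀ L : ℝ, 2 / 3 * 3 ^ (29 * d) ≤ L →
      ∃ L' ≤ 5 / 4 * L, ∃ Lt ≤ 72 * L ^ 3,
        annealed P Pr 0
          {X | ∃ n, X n ∉ polyBox R L L' Lt ∧ (∀ m < n, X m ∈ polyBox R L L' Lt) ∧
                dot ℓ (X n) < L}
          ≤ ENNReal.ofReal (L ^ (-M))

/-- The backtracking time `D = inf{n ≥ 0 : X_n·ℓ < X_0·ℓ}`. -/
def Dtime {d : ℕ} (ℓ : Fin d → ℝ) (X : Traj d) : ℕ∞ :=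
  ⨅ (n : ℕ) (_ : dot ℓ (X n) < dot ℓ (X 0)), (n : ℕ∞)

/-- The triples `(S_k, R_k, M_k)` of the regeneration structure. -/
def regenAux {d : ℕ} (ℓ : Fin d → ℝ) (a : ℝ) (X : Traj d) : ℕ → ℕ∞ × ℕ∞ × EReal
  | 0 => (0, 0, ((dot ℓ (X 0) : ℝ) : EReal))
  | k + 1 =>
    let M := (regenAux ℓ a X k).2.2
    let S : ℕ∞ := ⨅ (n : ℕ) (_ : M + (a : EReal) < ((dot ℓ (X n) : ℝ) : EReal)), (n : ℕ∞)
    let R : ℕ∞ := ⨅ (n : ℕ) (_ : (n : ℕ∞) = S), (S + Dtime ℓ fun m => X (n + m))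
    (S, R, ⨆ (n : ℕ) (_ : (n : ℕ∞) ≤ R), ((dot ℓ (X n) : ℝ) : EReal))

/-- The first regeneration time `τ₁ = S_K`. -/
def tau1 {d : ℕ} (ℓ : Fin d → ℝ) (a : ℝ) (X : Traj d) : ℕ∞ :=
  ⨅ (k : ℕ) (_ : 1 ≤ k ∧ (regenAux ℓ a X k).1 ≠ ⊤ ∧ (regenAux ℓ a X k).2.1 = ⊤),
    (regenAux ℓ a X k).1

/-- The `ℓ¹` norm on `ℤ^d`. -/
def norm1 {d : ℕ} (x : V d) : ℤ := ∑ i, |x i|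

/-- `ℙ`-expectation, under the annealed law started at `x`, of `(T^ex_𝔥)^α`. -/
def cubeExitMoment {d : ℕ} (P : Env d → V d → Measure (Traj d)) (Pr : Measure (Env d))
    (x : V d) (α : ℝ) : ℝ≥0∞ :=
  ∫⁻ X, ((exitTime (cube 0) X : ℝ≥0∞)) ^ α ∂(annealed P Pr x)

/-! ### Auxiliary material for Statement 7 -/

section Aux

variable {d : ℕ}

lemma pmf_nonneg (ω : Env d) (x : V d) (e : Dir d) : 0 ≤ pmf ω x e := (ω x).2.1 e

lemma pmf_sum_one (ω : Env d) (x : V d) : ∑ e : Dir d, pmf ω x e = 1 := (ω x).2.2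

lemma stepProb_nonneg (ω : Env d) (x y : V d) : 0 ≤ stepProb ω x y :=
  Finset.sum_nonneg fun e _ => by
    split_ifs
    · exact pmf_nonneg ω x e
    · exact le_rfl

lemma mem_cubePts {y : V d} : y ∈ cubePts d ↔ ∀ i, y i = 0 ∨ y i = 1 := by
  constructor
  · rintro h i
    simp only [cubePts, Finset.mem_image] at h
    obtain ⟨s, -, rfl⟩ := h
    by_cases hs : s i <;> simp [hs]
  · intro h
    simp only [cubePts, Finset.mem_image]
    refine ⟨fun i => decide (y i = 1), Finset.mem_univ _, ?_⟩
    funext i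
    rcases h i with h0 | h1
    · simp [h0]
    · simp [h1]

lemma zero_mem_cubePts : (0 : V d) ∈ cubePts d :=
  mem_cubePts.2 fun _ => Or.inl rfl

lemma cube_zero_eq : cube (0 : V d) = ↑(cubePts d) := by
  ext y
  simp only [cube, Set.mem_setOf_eq, Finset.mem_coe, mem_cubePts, Pi.zero_apply, zero_add]

lemma zero_mem_cube_zero : (0 : V d) ∈ cube (0 : V d) := fun _ => Or.inl rfl

lemma mem_cube_iff {c y : V d} : y ∈ cube c ↔ y - c ∈ cube (0 : V d) := by
  simp only [cube, Set.mem_setOf_eq, Pi.sub_apply, Pi.zero_apply]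
  constructor <;> intro h i <;> have := h i <;> omega

lemma bdry_shift {c z : V d} : z ∈ bdry (cube c) ↔ z - c ∈ bdry (cube (0 : V d)) := by
  constructor
  · rintro ⟨hz, w, hw, hsum⟩
    refine ⟨fun h => hz (mem_cube_iff.2 (by simpa using h)), w - c, mem_cube_iff.1 hw, ?_⟩
    rw [← hsum]
    refine Finset.sum_congr rfl fun i _ => ?_
    simp [Pi.sub_apply, sub_sub_sub_cancel_right]
  · rintro ⟨hz, w, hw, hsum⟩
    refine ⟨fun h => hz (mem_cube_iff.1 h), w + c, mem_cube_iff.2 (by simpa using hw), ?_⟩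
    rw [← hsum]
    refine Finset.sum_congr rfl fun i _ => ?_
    have : z i - (w + c) i = (z - c) i - w i := by simp [Pi.sub_apply, Pi.add_apply]; ring
    rw [this]

lemma bdryAt_shift {c y z : V d} :
    z ∈ bdryAt y (cube c) ↔ z - c ∈ bdryAt (y - c) (cube (0 : V d)) := by
  unfold bdryAt
  simp only [Set.mem_setOf_eq]
  rw [bdry_shift]
  have : ∑ i, |(z - c) i - (y - c) i| = ∑ i, |z i - y i| := by
    refine Finset.sum_congr rfl fun i _ => ?_
    simp [Pi.sub_apply, sub_sub_sub_cancel_right]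
  rw [this]

lemma Qmax_shift (ω : Env d) (c z : V d) :
    Qmax ω (cube c) (z + c) = Qmax (fun x => ω (x + c)) (cube (0 : V d)) z := by
  unfold Qmax
  refine iSup_congr fun e => ?_
  have hiff : (z + c + dirVec d e ∈ bdryAt (z + c) (cube c)) ↔
      (z + dirVec d e ∈ bdryAt z (cube (0 : V d))) := by
    rw [bdryAt_shift]
    have h1 : z + c + dirVec d e - c = z + dirVec d e := by ring
    have h2 : z + c - c = z := by ring
    rw [h1, h2]
  rw [if_congr hiff rfl rfl]
  rfl

/-! #### Shift invariance of the i.i.d. environment law -/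

set_option synthInstance.maxHeartbeats 1000000 in
lemma jointLaw (Pr : Measure (Env d)) (hiid : IsIID Pr) {κ : Type} [Fintype κ]
    (φ : κ → V d) (hφ : Function.Injective φ) :
    Pr.map (fun ω (i : κ) => ω (φ i))
      = Measure.pi (fun _ : κ => Pr.map fun ω => ω (0 : V d)) := by
  haveI : IsProbabilityMeasure Pr := hiid.1
  haveI : IsProbabilityMeasure (Pr.map fun ω : Env d => ω (0 : V d)) :=
    Measure.isProbabilityMeasure_map (measurable_pi_apply _).aemeasurable
  haveI : ∀ _i : κ, SigmaFinite (Pr.map fun ω : Env d => ω (0 : V d)) := fun _ => inferInstance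
  symm
  apply Measure.pi_eq
  intro A hA
  classical
  set sets : V d → Set (ProbVec d) :=
    fun x => if h : ∃ i, φ i = x then A h.choose else Set.univ with hsets
  have hsetsφ : ∀ i, sets (φ i) = A i := by
    intro i
    have hex : ∃ j, φ j = φ i := ⟨i, rfl⟩
    have hch : hex.choose = i := hφ hex.choose_spec
    simp only [hsets, dif_pos hex]
    exact congrArg A hch
  have hsetsm : ∀ x, MeasurableSet (sets x) := by
    intro x
    simp only [hsets]
    split_ifs with h
    · exact hA _
    · exact MeasurableSet.univ
  have hmeasg : Measurable (fun ω : Env d => (fun i : κ => ω (φ i))) :=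
    measurable_pi_lambda _ fun i => measurable_pi_apply _
  rw [Measure.map_apply hmeasg (MeasurableSet.univ_pi hA)]
  have hpre : (fun ω : Env d => (fun i : κ => ω (φ i))) ⁻¹' Set.univ.pi A
      = ⋂ x ∈ Finset.image φ Finset.univ, (fun ω : Env d => ω x) ⁻¹' sets x := by
    ext ω
    simp only [Set.mem_preimage, Set.mem_pi, Set.mem_univ, forall_true_left, Set.mem_iInter,
      Finset.mem_image, Finset.mem_univ, true_and]
    constructor
    · rintro h x ⟨i, rfl⟩
      rw [hsetsφ]
      exact h i
    · intro h i
      have := h (φ i) ⟨i, rfl⟩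
      rwa [hsetsφ] at this
  rw [hpre,
    (ProbabilityTheory.iIndepFun_iff_measure_inter_preimage_eq_mul.1 hiid.2.1)
      (Finset.image φ Finset.univ) (fun x _ => hsetsm x),
    Finset.prod_image (fun x _ y _ h => hφ h)]
  refine Finset.prod_congr rfl fun i _ => ?_
  rw [hsetsφ]
  rw [← Measure.map_apply (measurable_pi_apply (φ i)) (hA i), hiid.2.2 (φ i)]

lemma shift_invariant (Pr : Measure (Env d)) (hiid : IsIID Pr) (c : V d) :
    Pr.map (fun ω x => ω (x + c)) = Pr := by
  haveI : IsProbabilityMeasure Pr := hiid.1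
  have hshift : Measurable (fun ω : Env d => (fun x => ω (x + c) : Env d)) :=
    measurable_pi_lambda _ fun x => measurable_pi_apply _
  haveI : IsProbabilityMeasure (Pr.map fun ω x => ω (x + c)) :=
    Measure.isProbabilityMeasure_map hshift.aemeasurable
  refine ext_of_generate_finite _ generateFrom_measurableCylinders.symm
    isPiSystem_measurableCylinders (fun t ht => ?_) (by simp)
  obtain ⟨s, S, hS, rfl⟩ := (mem_measurableCylinders t).1 ht
  have h1 : Measurable (fun ω : Env d => (fun i : s => ω ((i : V d) + c))) :=
    measurable_pi_lambda _ fun i => measurable_pi_apply _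
  have h2 : Measurable (fun ω : Env d => (fun i : s => ω (i : V d))) :=
    measurable_pi_lambda _ fun i => measurable_pi_apply _
  rw [Measure.map_apply hshift hS.cylinder]
  have hpre : (fun ω x => ω (x + c)) ⁻¹' cylinder s S
      = (fun ω : Env d => (fun i : s => ω ((i : V d) + c))) ⁻¹' S := rfl
  have hcyl : (cylinder s S : Set (Env d))
      = (fun ω : Env d => (fun i : s => ω (i : V d))) ⁻¹' S := rfl
  rw [hpre, ← Measure.map_apply h1 hS,
    jointLaw Pr hiid (fun i : s => (i : V d) + c)
      (fun i j h => Subtype.ext (by exact add_right_cancel h)),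
    ← jointLaw Pr hiid (fun i : s => (i : V d)) Subtype.val_injective,
    Measure.map_apply h2 hS, hcyl]

/-! #### Measurability lemmas -/

lemma exists_eq_iInf_enat (f : ℕ → ℕ∞) : ∃ m, f m = ⨅ n, f n := by
  obtain ⟨a, ⟨m, rfl⟩, ha⟩ :=
    (wellFounded_lt (α := ℕ∞)).has_min (Set.range f) (Set.range_nonempty f)
  exact ⟨m, le_antisymm (le_iInf fun n => not_lt.1 (ha _ (Set.mem_range_self n))) (iInf_le _ m)⟩

lemma toENNReal_iInf_nat (f : ℕ → ℕ∞) :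
    (((⨅ n, f n : ℕ∞)) : ℝ≥0∞) = ⨅ n, ((f n : ℕ∞) : ℝ≥0∞) := by
  obtain ⟨m, hm⟩ := exists_eq_iInf_enat f
  refine le_antisymm (le_iInf fun n => ENat.toENNReal_le.2 (iInf_le _ n)) ?_
  rw [← hm]
  exact iInf_le _ m

lemma exitTime_coe (A : Set (V d)) (X : Traj d) :
    ((exitTime A X : ℕ∞) : ℝ≥0∞) = ⨅ n : ℕ, (if X n ∈ A then (⊤ : ℝ≥0∞) else (n : ℝ≥0∞)) := by
  have h1 : exitTime A X = ⨅ n : ℕ, (if X n ∈ A then (⊤ : ℕ∞) else (n : ℕ∞)) := by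
    unfold exitTime
    refine iInf_congr fun n => ?_
    by_cases h : X n ∈ A
    · rw [if_pos h, iInf_neg (by simpa using h)]
    · rw [if_neg h, iInf_pos h]
  rw [h1, toENNReal_iInf_nat]
  refine iInf_congr fun n => ?_
  by_cases h : X n ∈ A <;> simp [h]

lemma measurable_exitTime_coe (A : Set (V d)) (hA : MeasurableSet A) :
    Measurable (fun X : Traj d => ((exitTime A X : ℕ∞) : ℝ≥0∞)) := by
  simp only [exitTime_coe]
  refine Measurable.iInf fun n => Measurable.ite ((measurable_pi_apply n) hA)
    measurable_const measurable_const

lemma measurable_pmf (y : V d) (e : Dir d) : Measurable fun ω : Env d => pmf ω y e :=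
  ((measurable_pi_apply e).comp measurable_subtype_coe).comp (measurable_pi_apply y)

lemma measurable_Qmax (hd : 0 < d) (C : Set (V d)) (y : V d) :
    Measurable fun ω : Env d => Qmax ω C y := by
  haveI : Nonempty (Dir d) := ⟨(⟨0, hd⟩, true)⟩
  have hrw : (fun ω : Env d => Qmax ω C y)
      = Finset.univ.sup' Finset.univ_nonempty
        (fun e (ω : Env d) => if y + dirVec d e ∈ bdryAt y C then pmf ω y e else 0) := by
    funext ω
    unfold Qmax
    rw [← Finset.sup'_univ_eq_ciSup]
    rw [Finset.sup'_apply]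
  rw [hrw]
  refine Finset.measurable_sup' _ fun e _ => ?_
  by_cases h : y + dirVec d e ∈ bdryAt y C
  · simpa [h] using measurable_pmf y e
  · simp only [h, if_false]
    exact measurable_const

lemma measurable_infQ (hd : 0 < d) (C : Set (V d)) :
    Measurable fun ω : Env d => ⨅ y ∈ C, (ENNReal.ofReal (Qmax ω C y))⁻¹ := by
  have hrw : (fun ω : Env d => ⨅ y ∈ C, (ENNReal.ofReal (Qmax ω C y))⁻¹)
      = fun ω => ⨅ y : C, (ENNReal.ofReal (Qmax ω C ↑y))⁻¹ := by
    funext ω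
    exact (iInf_subtype'' C fun y => (ENNReal.ofReal (Qmax ω C y))⁻¹).symm
  rw [hrw]
  exact Measurable.iInf fun y =>
    (ENNReal.measurable_ofReal.comp (measurable_Qmax hd C y)).inv

/-! #### The staying probability -/

/-- Extension of a finite path to a full trajectory. -/
def pext {n : ℕ} (v : Fin (n + 1) → ↥(cubePts d)) : ℕ → V d :=
  fun k => if h : k < n + 1 then ↑(v ⟨k, h⟩) else 0

lemma stay_eq (P : Env d → V d → Measure (Traj d)) (hP : IsQuenched P) (ω : Env d) (n : ℕ) :
    (P ω 0 {X | ∀ k ≤ n, X k ∈ cube (0 : V d)}).toReal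
      = ∑ v : Fin (n + 1) → ↥(cubePts d),
          (if (v 0 : V d) = 0 then (1 : ℝ) else 0)
            * ∏ k : Fin n, stepProb ω ↑(v k.castSucc) ↑(v k.succ) := by
  haveI := hP.1 ω 0
  have hdecomp : {X : Traj d | ∀ k ≤ n, X k ∈ cube (0 : V d)}
      = ⋃ v : Fin (n + 1) → ↥(cubePts d), {X | ∀ k ≤ n, X k = pext v k} := by
    ext X
    simp only [Set.mem_setOf_eq, Set.mem_iUnion]
    constructor
    · intro h
      refine ⟨fun k => ⟨X k, ?_⟩, fun k hk => ?_⟩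
      · have hm := h k (Nat.lt_succ_iff.1 k.isLt)
        rw [cube_zero_eq] at hm
        exact hm
      · simp only [pext]
        rw [dif_pos (Nat.lt_succ_of_le hk)]
    · rintro ⟨v, hv⟩ k hk
      rw [hv k hk]
      simp only [pext]
      rw [dif_pos (Nat.lt_succ_of_le hk), cube_zero_eq]
      exact (v _).2
  have hmeasE : ∀ v : Fin (n + 1) → ↥(cubePts d),
      MeasurableSet {X : Traj d | ∀ k ≤ n, X k = pext v k} := by
    intro v
    have : {X : Traj d | ∀ k ≤ n, X k = pext v k}
        = ⋂ k, ⋂ (_ : k ≤ n), (fun X : Traj d => X k) ⁻¹' {pext v k} := by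
      ext X
      simp [Set.mem_iInter]
    rw [this]
    exact MeasurableSet.iInter fun k => MeasurableSet.iInter fun _ =>
      (measurable_pi_apply k) (measurableSet_singleton _)
  have hdisj : Pairwise (Function.onFun Disjoint
      fun v : Fin (n + 1) → ↥(cubePts d) => {X : Traj d | ∀ k ≤ n, X k = pext v k}) := by
    intro v w hvw
    refine Set.disjoint_left.2 fun X hX hX' => hvw ?_
    funext k
    have h1 := hX (k : ℕ) (Nat.lt_succ_iff.1 k.isLt)
    have h2 := hX' (k : ℕ) (Nat.lt_succ_iff.1 k.isLt)
    have e1 : pext v (k : ℕ) = (v k : V d) := by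
      simp only [pext]
      rw [dif_pos k.isLt]
    have e2 : pext w (k : ℕ) = (w k : V d) := by
      simp only [pext]
      rw [dif_pos k.isLt]
    exact Subtype.ext (by rw [← e1, ← h1, h2, e2])
  rw [hdecomp, measure_iUnion hdisj hmeasE, tsum_fintype,
    ENNReal.toReal_sum (fun v _ => measure_ne_top _ _)]
  refine Finset.sum_congr rfl fun v _ => ?_
  rw [hP.2.2 ω 0 n (pext v)]
  refine congrArg₂ (· * ·) ?_ ?_
  · have h0 : pext v 0 = (v 0 : V d) := by
      simp only [pext]
      rw [dif_pos n.succ_pos]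
      exact congrArg _ (congrArg v (Fin.ext (by simp)))
    rw [h0]
  · rw [← Fin.prod_univ_eq_prod_range (fun k => stepProb ω (pext v k) (pext v (k + 1))) n]
    refine Finset.prod_congr rfl fun k _ => ?_
    have h1 : pext v (k : ℕ) = (v k.castSucc : V d) := by
      simp only [pext]
      rw [dif_pos (by omega : (k : ℕ) < n + 1)]
      exact congrArg _ (congrArg v (Fin.ext (by simp)))
    have h2 : pext v ((k : ℕ) + 1) = (v k.succ : V d) := by
      simp only [pext]
      rw [dif_pos (by omega : (k : ℕ) + 1 < n + 1)]
      exact congrArg _ (congrArg v (Fin.ext (by simp)))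
    rw [h1, h2]

lemma SS_lower (ω : Env d) {r : ℝ} (hr0 : 0 ≤ 1 - r)
    (hsum : ∀ x ∈ cubePts d, 1 - r ≤ ∑ y ∈ cubePts d, stepProb ω x y) (n : ℕ) :
    (1 - r) ^ n ≤ ∑ v : Fin (n + 1) → ↥(cubePts d),
        (if (v 0 : V d) = 0 then (1 : ℝ) else 0)
          * ∏ k : Fin n, stepProb ω ↑(v k.castSucc) ↑(v k.succ) := by
  induction n with
  | zero =>
    have hbij : Function.Bijective (fun y : ↥(cubePts d) => (fun _ : Fin 1 => y)) := by
      constructor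
      · intro a b h
        exact congrFun h 0
      · intro v
        exact ⟨v 0, funext fun k => by rw [Subsingleton.elim k 0]⟩
    rw [pow_zero, ← Fintype.sum_bijective _ hbij
      (fun y : ↥(cubePts d) => if (y : V d) = 0 then (1 : ℝ) else 0) _
      (fun y => by simp)]
    rw [Finset.sum_coe_sort (cubePts d) (fun z => if z = (0 : V d) then (1 : ℝ) else 0),
      Finset.sum_ite_eq' (cubePts d) (0 : V d) (fun _ => (1 : ℝ)), if_pos zero_mem_cubePts]
  | succ n ih =>
    have hbj : Function.Bijective
        (fun p : (Fin (n + 1) → ↥(cubePts d)) × ↥(cubePts d) =>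
          (Fin.snoc p.1 p.2 : Fin (n + 2) → ↥(cubePts d))) := by
      constructor
      · rintro ⟨u, y⟩ ⟨u', y'⟩ h
        have h1 : y = y' := by
          have := congrFun h (Fin.last (n + 1))
          simpa [Fin.snoc_last] using this
        have h2 : u = u' := funext fun k => by
          have := congrFun h k.castSucc
          simpa [Fin.snoc_castSucc] using this
        exact Prod.ext h2 h1
      · intro v
        exact ⟨(Fin.init v, v (Fin.last _)), Fin.snoc_init_self v⟩
    have hterm : ∀ p : (Fin (n + 1) → ↥(cubePts d)) × ↥(cubePts d),
        (if ((Fin.snoc p.1 p.2 : Fin (n + 2) → ↥(cubePts d)) 0 : V d) = 0 then (1 : ℝ) else 0)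
            * ∏ k : Fin (n + 1), stepProb ω ↑((Fin.snoc p.1 p.2 : Fin (n + 2) → ↥(cubePts d)) k.castSucc)
                ↑((Fin.snoc p.1 p.2 : Fin (n + 2) → ↥(cubePts d)) k.succ)
          = ((if (p.1 0 : V d) = 0 then (1 : ℝ) else 0)
              * ∏ k : Fin n, stepProb ω ↑(p.1 k.castSucc) ↑(p.1 k.succ))
            * stepProb ω ↑(p.1 (Fin.last n)) ↑p.2 := by
      rintro ⟨u, y⟩
      have hz : (Fin.snoc u y : Fin (n + 2) → ↥(cubePts d)) 0 = u 0 := by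
        rw [show (0 : Fin (n + 2)) = (0 : Fin (n + 1)).castSucc from (Fin.castSucc_zero).symm,
          Fin.snoc_castSucc]
      have hprod : ∏ k : Fin (n + 1),
          stepProb ω ↑((Fin.snoc u y : Fin (n + 2) → ↥(cubePts d)) k.castSucc)
            ↑((Fin.snoc u y : Fin (n + 2) → ↥(cubePts d)) k.succ)
          = (∏ k : Fin n, stepProb ω ↑(u k.castSucc) ↑(u k.succ))
              * stepProb ω ↑(u (Fin.last n)) ↑y := by
        rw [Fin.prod_univ_castSucc]
        congr 1
        · refine Finset.prod_congr rfl fun k _ => ?_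
          rw [Fin.snoc_castSucc, Fin.succ_castSucc, Fin.snoc_castSucc]
        · rw [Fin.snoc_castSucc, Fin.succ_last, Fin.snoc_last]
      rw [hz, hprod]
      ring
    have hinner : ∀ u : Fin (n + 1) → ↥(cubePts d),
        ((if (u 0 : V d) = 0 then (1 : ℝ) else 0)
            * ∏ k : Fin n, stepProb ω ↑(u k.castSucc) ↑(u k.succ)) * (1 - r)
          ≤ ∑ y : ↥(cubePts d),
              ((if (u 0 : V d) = 0 then (1 : ℝ) else 0)
                  * ∏ k : Fin n, stepProb ω ↑(u k.castSucc) ↑(u k.succ))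
                * stepProb ω ↑(u (Fin.last n)) ↑y := by
      intro u
      have hnn : 0 ≤ (if (u 0 : V d) = 0 then (1 : ℝ) else 0)
          * ∏ k : Fin n, stepProb ω ↑(u k.castSucc) ↑(u k.succ) := by
        apply mul_nonneg
        · split_ifs <;> norm_num
        · exact Finset.prod_nonneg fun k _ => stepProb_nonneg _ _ _
      rw [← Finset.mul_sum]
      refine mul_le_mul_of_nonneg_left ?_ hnn
      rw [Finset.sum_coe_sort (cubePts d) (fun z => stepProb ω ↑(u (Fin.last n)) z)]
      exact hsum _ (u (Fin.last n)).2
    calc (1 - r) ^ (n + 1) = (1 - r) ^ n * (1 - r) := by ring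
    _ ≤ (∑ v : Fin (n + 1) → ↥(cubePts d),
          (if (v 0 : V d) = 0 then (1 : ℝ) else 0)
            * ∏ k : Fin n, stepProb ω ↑(v k.castSucc) ↑(v k.succ)) * (1 - r) :=
        mul_le_mul_of_nonneg_right ih hr0
    _ = ∑ u : Fin (n + 1) → ↥(cubePts d),
          ((if (u 0 : V d) = 0 then (1 : ℝ) else 0)
            * ∏ k : Fin n, stepProb ω ↑(u k.castSucc) ↑(u k.succ)) * (1 - r) := by
        rw [Finset.sum_mul]
    _ ≤ _ := by
        rw [← Fintype.sum_bijective _ hbj _ _ (fun p => (hterm p).symm),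
          Fintype.sum_prod_type]
        exact Finset.sum_le_sum fun u _ => hinner u

/-! #### The quenched estimate -/

lemma quenched_bound (hd : 2 ≤ d) (P : Env d → V d → Measure (Traj d)) (hP : IsQuenched P)
    (ω : Env d) (hell : ∀ x e, 0 < pmf ω x e) :
    ⨅ y ∈ cube (0 : V d), (ENNReal.ofReal (Qmax ω (cube (0 : V d)) y))⁻¹
      ≤ (8 * d : ℝ≥0∞) * ∫⁻ X, ((exitTime (cube (0 : V d)) X : ℕ∞) : ℝ≥0∞) ∂(P ω 0) := by
  haveI := hP.1 ω 0
  have hd0 : 0 < d := by omega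
  have hdR : (0 : ℝ) < d := by exact_mod_cast hd0
  have hne : (cubePts d).Nonempty := ⟨0, zero_mem_cubePts⟩
  set exitP : V d → ℝ :=
    fun x => ∑ e : Dir d, if x + dirVec d e ∈ cube (0 : V d) then 0 else pmf ω x e with hexitP
  set r := (cubePts d).sup' hne exitP with hrdef
  obtain ⟨xs, hxs, hxr⟩ := Finset.exists_mem_eq_sup' hne exitP
  have hxs_cube : xs ∈ cube (0 : V d) := by
    rw [cube_zero_eq]
    exact hxs
  -- r is positive
  have hrpos : 0 < r := by
    have h0 : (0 : V d) + dirVec d ((⟨0, hd0⟩, false) : Dir d) ∉ cube (0 : V d) := by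
      intro hmem
      have h := hmem ⟨0, hd0⟩
      have hc : ((0 : V d) + dirVec d ((⟨0, hd0⟩, false) : Dir d)) ⟨0, hd0⟩ = -1 := by
        simp [dirVec]
      rw [hc] at h
      simp only [Pi.zero_apply] at h
      rcases h with h | h <;> omega
    have h1 : pmf ω 0 ((⟨0, hd0⟩, false) : Dir d) ≤ exitP 0 := by
      have hle := Finset.single_le_sum
        (f := fun e => if (0 : V d) + dirVec d e ∈ cube (0 : V d) then 0 else pmf ω 0 e)
        (fun e _ => by split_ifs; exacts [le_rfl, pmf_nonneg ω 0 e])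
        (Finset.mem_univ ((⟨0, hd0⟩, false) : Dir d))
      rwa [if_neg h0] at hle
    calc (0 : ℝ) < pmf ω 0 ((⟨0, hd0⟩, false) : Dir d) := hell 0 _
    _ ≤ exitP 0 := h1
    _ ≤ r := Finset.le_sup' exitP zero_mem_cubePts
  -- r is at most one
  have hr1 : r ≤ 1 := by
    refine Finset.sup'_le hne exitP fun x hx => ?_
    calc exitP x ≤ ∑ e : Dir d, pmf ω x e :=
        Finset.sum_le_sum fun e _ => by split_ifs; exacts [pmf_nonneg ω x e, le_rfl]
    _ = 1 := pmf_sum_one ω x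
  -- r ≤ 2d * Qmax
  have hQb : r ≤ (2 * d : ℝ) * Qmax ω (cube (0 : V d)) xs := by
    rw [hrdef, hxr]
    have hbdd : BddAbove (Set.range fun e' : Dir d =>
        if xs + dirVec d e' ∈ bdryAt xs (cube (0 : V d)) then pmf ω xs e' else 0) :=
      (Set.finite_range _).bddAbove
    have hterm : ∀ e : Dir d,
        (if xs + dirVec d e ∈ cube (0 : V d) then 0 else pmf ω xs e)
          ≤ Qmax ω (cube (0 : V d)) xs := by
      intro e
      split_ifs with hmem
      · refine le_trans ?_ (le_ciSup hbdd e)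
        split_ifs
        · exact pmf_nonneg ω xs e
        · exact le_rfl
      · have hdist : ∑ i, |(xs + dirVec d e) i - xs i| = (1 : ℤ) := by
          have habs : ∀ i, |(xs + dirVec d e) i - xs i| = if i = e.1 then 1 else 0 := by
            intro i
            have : (xs + dirVec d e) i - xs i = dirVec d e i := by
              simp [Pi.add_apply]
            rw [this]
            unfold dirVec
            split_ifs <;> simp
          simp_rw [habs]
          rw [Finset.sum_ite_eq' Finset.univ e.1 (fun _ => (1 : ℤ)), if_pos (Finset.mem_univ _)]
        have hcond : xs + dirVec d e ∈ bdryAt xs (cube (0 : V d)) :=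
          ⟨⟨hmem, xs, hxs_cube, hdist⟩, hdist⟩
        refine le_trans ?_ (le_ciSup hbdd e)
        rw [if_pos hcond]
    calc exitP xs ≤ ∑ _e : Dir d, Qmax ω (cube (0 : V d)) xs :=
        Finset.sum_le_sum fun e _ => hterm e
    _ = (2 * d : ℝ) * Qmax ω (cube (0 : V d)) xs := by
        rw [Finset.sum_const, Finset.card_univ, nsmul_eq_mul]
        congr 1
        simp [Fintype.card_prod]
        ring
  have hQpos : 0 < Qmax ω (cube (0 : V d)) xs := by nlinarith
  -- the sum estimate
  have hsum : ∀ x ∈ cubePts d, 1 - r ≤ ∑ y ∈ cubePts d, stepProb ω x y := by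
    intro x hx
    have h1 : ∑ y ∈ cubePts d, stepProb ω x y
        = ∑ e : Dir d, if x + dirVec d e ∈ cubePts d then pmf ω x e else 0 := by
      unfold stepProb
      rw [Finset.sum_comm]
      refine Finset.sum_congr rfl fun e _ => ?_
      exact Finset.sum_ite_eq' (cubePts d) (x + dirVec d e) (fun _ => pmf ω x e)
    have h2 : ∀ e : Dir d, (if x + dirVec d e ∈ cubePts d then pmf ω x e else 0)
        = pmf ω x e - (if x + dirVec d e ∈ cube (0 : V d) then 0 else pmf ω x e) := by
      intro e
      rw [cube_zero_eq]
      by_cases h : x + dirVec d e ∈ cubePts d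
      · simp [h]
      · simp [h]
    rw [h1]
    calc 1 - r ≤ ∑ e : Dir d, pmf ω x e - exitP x := by
          rw [pmf_sum_one ω x]
          exact sub_le_sub_left (Finset.le_sup' exitP hx) 1
    _ = ∑ e : Dir d, (pmf ω x e
          - (if x + dirVec d e ∈ cube (0 : V d) then 0 else pmf ω x e)) := by
        rw [Finset.sum_sub_distrib]
    _ = ∑ e : Dir d, (if x + dirVec d e ∈ cubePts d then pmf ω x e else 0) :=
        Finset.sum_congr rfl fun e _ => (h2 e).symm
  -- lower bound on the expected exit time
  have hTlow : ∀ n : ℕ, ((n + 1 : ℕ) : ℝ≥0∞) * ENNReal.ofReal ((1 - r) ^ n)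
      ≤ ∫⁻ X, ((exitTime (cube (0 : V d)) X : ℕ∞) : ℝ≥0∞) ∂(P ω 0) := by
    intro n
    set A : Set (Traj d) := {X | ∀ k ≤ n, X k ∈ cube (0 : V d)} with hA
    have hAmeas : MeasurableSet A := by
      have : A = ⋂ k, ⋂ (_ : k ≤ n), (fun X : Traj d => X k) ⁻¹' (cube (0 : V d)) := by
        ext X
        simp [hA, Set.mem_iInter]
      rw [this]
      exact MeasurableSet.iInter fun k => MeasurableSet.iInter fun _ =>
        (measurable_pi_apply k) ((Set.to_countable _).measurableSet)
    have hpoint : ∀ X, A.indicator (fun _ => ((n + 1 : ℕ) : ℝ≥0∞)) X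
        ≤ ((exitTime (cube (0 : V d)) X : ℕ∞) : ℝ≥0∞) := by
      intro X
      by_cases hX : X ∈ A
      · rw [Set.indicator_of_mem hX]
        have hle : ((n + 1 : ℕ) : ℕ∞) ≤ exitTime (cube (0 : V d)) X := by
          refine le_iInf fun m => le_iInf fun hm => ?_
          have hnm : n + 1 ≤ m := by
            by_contra hlt
            push_neg at hlt
            exact hm (hX m (by omega))
          exact_mod_cast hnm
        calc ((n + 1 : ℕ) : ℝ≥0∞) = (((n + 1 : ℕ) : ℕ∞) : ℝ≥0∞) := by norm_cast
        _ ≤ _ := ENat.toENNReal_le.2 hle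
      · rw [Set.indicator_of_notMem hX]
        exact zero_le
    have hPA : ENNReal.ofReal ((1 - r) ^ n) ≤ P ω 0 A := by
      rw [← ENNReal.ofReal_toReal (measure_ne_top (P ω 0) A)]
      refine ENNReal.ofReal_le_ofReal ?_
      rw [hA, stay_eq P hP ω n]
      exact SS_lower ω (by linarith) hsum n
    calc ((n + 1 : ℕ) : ℝ≥0∞) * ENNReal.ofReal ((1 - r) ^ n)
        ≤ ((n + 1 : ℕ) : ℝ≥0∞) * P ω 0 A := mul_le_mul_right hPA _
    _ = ∫⁻ X, A.indicator (fun _ => ((n + 1 : ℕ) : ℝ≥0∞)) X ∂(P ω 0) := by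
        rw [lintegral_indicator hAmeas, setLIntegral_const]
    _ ≤ _ := lintegral_mono hpoint
  -- choose n
  set n := ⌊1 / (2 * r)⌋₊ with hn
  have hhalf : (1 / 2 : ℝ) ≤ (1 - r) ^ n := by
    have hb := one_add_mul_le_pow (a := -r) (by linarith) n
    have hnle : (n : ℝ) ≤ 1 / (2 * r) := Nat.floor_le (by positivity)
    have hnr : (n : ℝ) * r ≤ 1 / 2 := by
      calc (n : ℝ) * r ≤ (1 / (2 * r)) * r := mul_le_mul_of_nonneg_right hnle hrpos.le
      _ = 1 / 2 := by
        field_simp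
    calc (1 / 2 : ℝ) ≤ 1 + (n : ℝ) * (-r) := by nlinarith
    _ ≤ (1 + -r) ^ n := hb
    _ = (1 - r) ^ n := by ring_nf
  have hkey : ENNReal.ofReal (1 / (4 * r))
      ≤ ∫⁻ X, ((exitTime (cube (0 : V d)) X : ℕ∞) : ℝ≥0∞) ∂(P ω 0) := by
    refine le_trans ?_ (hTlow n)
    have h14 : (1 / (4 * r) : ℝ) = (1 / (2 * r)) * (1 / 2) := by
      field_simp
      ring
    rw [h14, ENNReal.ofReal_mul (by positivity)]
    refine mul_le_mul' ?_ (ENNReal.ofReal_le_ofReal hhalf)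
    calc ENNReal.ofReal (1 / (2 * r)) ≤ ENNReal.ofReal ((n + 1 : ℕ) : ℝ) := by
          refine ENNReal.ofReal_le_ofReal ?_
          have := Nat.lt_floor_add_one (1 / (2 * r))
          push_cast
          push_cast at this
          linarith
      _ = ((n + 1 : ℕ) : ℝ≥0∞) := ENNReal.ofReal_natCast _
  -- final chain
  calc ⨅ y ∈ cube (0 : V d), (ENNReal.ofReal (Qmax ω (cube (0 : V d)) y))⁻¹
      ≤ (ENNReal.ofReal (Qmax ω (cube (0 : V d)) xs))⁻¹ := iInf₂_le xs hxs_cube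
  _ ≤ (ENNReal.ofReal (r / (2 * d)))⁻¹ := by
      refine ENNReal.inv_le_inv' (ENNReal.ofReal_le_ofReal ?_)
      rw [div_le_iff₀ (by positivity)]
      linarith [hQb]
  _ = ENNReal.ofReal ((r / (2 * d))⁻¹) := (ENNReal.ofReal_inv_of_pos (by positivity)).symm
  _ = ENNReal.ofReal ((8 * d) * (1 / (4 * r))) := by
      congr 1
      field_simp
      ring
  _ = ENNReal.ofReal (8 * d) * ENNReal.ofReal (1 / (4 * r)) :=
      ENNReal.ofReal_mul (by positivity)
  _ ≤ ENNReal.ofReal (8 * d) * ∫⁻ X, ((exitTime (cube (0 : V d)) X : ℕ∞) : ℝ≥0∞) ∂(P ω 0) :=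
      mul_le_mul_right hkey _
  _ = (8 * d : ℝ≥0∞) * ∫⁻ X, ((exitTime (cube (0 : V d)) X : ℕ∞) : ℝ≥0∞) ∂(P ω 0) := by
      congr 1
      rw [show (8 * (d : ℝ)) = ((8 * d : ℕ) : ℝ) by push_cast; ring, ENNReal.ofReal_natCast]
      push_cast
      ring

end Aux

/-- If `(H)_1^c` holds, i.e. the annealed expected exit time of the unit
hypercube is finite from every corner, then for every unit hypercube `H` containing `0` we
have `𝐄[min_{y ∈ H} (Q^H_y)⁻¹] < ∞`. -/
theorem min_Qmax_inv_integrable_of_Hc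
    (d : ℕ) (hd : 2 ≤ d)
    (P : Env d → V d → Measure (Traj d)) (hP : IsQuenched P)
    (Pr : Measure (Env d)) (hiid : IsIID Pr) (hell : Elliptic Pr)
    (hHc : ∀ x ∈ cube (0 : V d),
      ∫⁻ X, ((exitTime (cube 0) X : ℝ≥0∞)) ∂(annealed P Pr x) < ⊤) :
    ∀ c : V d, (0 : V d) ∈ cube c →
      ∫⁻ ω, ⨅ y ∈ cube c, (ENNReal.ofReal (Qmax ω (cube c) y))⁻¹ ∂Pr < ⊤ := by
  intro c hc
  haveI : IsProbabilityMeasure Pr := hiid.1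
  have hd0 : 0 < d := by omega
  have hGmeas : Measurable (fun ω : Env d =>
      ⨅ y ∈ cube (0 : V d), (ENNReal.ofReal (Qmax ω (cube (0 : V d)) y))⁻¹) :=
    measurable_infQ hd0 (cube (0 : V d))
  have hshift : Measurable (fun ω : Env d => (fun x => ω (x + c) : Env d)) :=
    measurable_pi_lambda _ fun x => measurable_pi_apply _
  have hre : ∀ ω : Env d,
      (⨅ y ∈ cube c, (ENNReal.ofReal (Qmax ω (cube c) y))⁻¹)
        = ⨅ y ∈ cube (0 : V d),
            (ENNReal.ofReal (Qmax (fun x => ω (x + c)) (cube (0 : V d)) y))⁻¹ := by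
    intro ω
    apply le_antisymm
    · refine le_iInf₂ fun z hz => ?_
      have h1 : z + c ∈ cube c := mem_cube_iff.2 (by simpa using hz)
      refine (iInf₂_le (z + c) h1).trans ?_
      rw [Qmax_shift ω c z]
    · refine le_iInf₂ fun y hy => ?_
      have h1 : y - c ∈ cube (0 : V d) := mem_cube_iff.1 hy
      refine (iInf₂_le (y - c) h1).trans ?_
      rw [← Qmax_shift ω c (y - c), sub_add_cancel]
  have hrewrite : ∫⁻ ω, ⨅ y ∈ cube c, (ENNReal.ofReal (Qmax ω (cube c) y))⁻¹ ∂Pr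
      = ∫⁻ ω, ⨅ y ∈ cube (0 : V d), (ENNReal.ofReal (Qmax ω (cube (0 : V d)) y))⁻¹ ∂Pr := by
    calc ∫⁻ ω, ⨅ y ∈ cube c, (ENNReal.ofReal (Qmax ω (cube c) y))⁻¹ ∂Pr
        = ∫⁻ ω, ⨅ y ∈ cube (0 : V d),
            (ENNReal.ofReal (Qmax (fun x => ω (x + c)) (cube (0 : V d)) y))⁻¹ ∂Pr :=
          lintegral_congr fun ω => hre ω
    _ = ∫⁻ ω, ⨅ y ∈ cube (0 : V d), (ENNReal.ofReal (Qmax ω (cube (0 : V d)) y))⁻¹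
          ∂(Pr.map (fun ω x => ω (x + c))) := (lintegral_map hGmeas hshift).symm
    _ = _ := by rw [shift_invariant Pr hiid c]
  rw [hrewrite]
  have hT : Measurable (fun X : Traj d => ((exitTime (cube (0 : V d)) X : ℕ∞) : ℝ≥0∞)) :=
    measurable_exitTime_coe _ ((Set.to_countable _).measurableSet)
  have hbound : ∀ᵐ ω ∂Pr,
      (⨅ y ∈ cube (0 : V d), (ENNReal.ofReal (Qmax ω (cube (0 : V d)) y))⁻¹)
        ≤ (8 * d : ℝ≥0∞)
            * ∫⁻ X, ((exitTime (cube (0 : V d)) X : ℕ∞) : ℝ≥0∞) ∂(P ω 0) :=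
    hell.mono fun ω hω => quenched_bound hd P hP ω hω
  have h8d : (8 * d : ℝ≥0∞) ≠ ⊤ :=
    ENNReal.mul_ne_top (by simp) (ENNReal.natCast_ne_top d)
  calc ∫⁻ ω, ⨅ y ∈ cube (0 : V d), (ENNReal.ofReal (Qmax ω (cube (0 : V d)) y))⁻¹ ∂Pr
      ≤ ∫⁻ ω, (8 * d : ℝ≥0∞)
          * ∫⁻ X, ((exitTime (cube (0 : V d)) X : ℕ∞) : ℝ≥0∞) ∂(P ω 0) ∂Pr :=
        lintegral_mono_ae hbound
  _ = (8 * d : ℝ≥0∞) * ∫⁻ ω, ∫⁻ X,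
        ((exitTime (cube (0 : V d)) X : ℕ∞) : ℝ≥0∞) ∂(P ω 0) ∂Pr :=
      lintegral_const_mul' _ _ h8d
  _ = (8 * d : ℝ≥0∞)
      * ∫⁻ X, ((exitTime (cube (0 : V d)) X : ℕ∞) : ℝ≥0∞) ∂(annealed P Pr 0) := by
      rw [annealed, Measure.lintegral_bind (hP.2.1 0).aemeasurable hT.aemeasurable]
  _ < ⊤ := ENNReal.mul_lt_top h8d.lt_top (hHc 0 zero_mem_cube_zero)

end RWRE
end
end

section
/- Consider the random environment 𝐏^expl on ℤ^d, d ≥ 2, with parameter ε ∈ (1/(2d+1), 2d/(2d+1)). Then for every family (φ(e))_{e∈U} ∈ (0,∞)^{2d} satisfying 2Σ_{e∈U}φ(e) − sup_{e∈U}(φ(e)+φ(−e)) > 1, there exists e_0 ∈ U such that 𝐄[exp(φ(e_0) log(1/p^ω(0,e_0)))] = ∞. In particular, 𝐏^expl does not satisfy condition (E')_1. -/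
open MeasureTheory ProbabilityTheory Filter Topology ENNReal
open scoped Classical

noncomputable section

namespace RWRE

/-- The uniform probability measure on the set of directions. -/
def uniformDir (d : ℕ) : Measure (Dir d) :=
  ((Fintype.card (Dir d) : ℝ≥0∞))⁻¹ • ∑ e : Dir d, Measure.dirac e

/-- The transition vector of the example environment `𝐏^expl` with strength `ε`, as a
function of the variables `(T, i₀)`: direction `i₀` gets probability `1/T`, the remaining
"positive" directions share `1 - ε` (minus `1/T` if `i₀` is positive), and the remaining
"negative" directions share `ε` (minus `1/T` if `i₀` is negative). -/
def pexpl (d : ℕ) (ε : ℝ) (ti : ℝ × Dir d) : Dir d → ℝ := fun e =>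
  if e = ti.2 then 1 / ti.1
  else if e.2 then
    (1 - ε - (if ti.2.2 then 1 / ti.1 else 0)) / ((d : ℝ) - (if ti.2.2 then 1 else 0))
  else (ε - (if ti.2.2 then 0 else 1 / ti.1)) / ((d : ℝ) - (if ti.2.2 then 0 else 1))

/-- The law `𝐏` is the i.i.d. environment `𝐏^expl` with parameter `ε`: the common site
marginal is the law of `pexpl (T, i₀)` where `T ≥ 2d+1` a.s. with
`𝐄[T^{1/(4d)}] = ∞`, `𝐄[T^{1/(8d)}] < ∞`, and `i₀` is an independent uniform direction. -/
def IsPexpl {d : ℕ} (Pr : Measure (Env d)) (ε : ℝ) : Prop :=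
  IsIID Pr ∧
  ∃ μT : Measure ℝ, IsProbabilityMeasure μT ∧
    μT {t | 2 * (d : ℝ) + 1 ≤ t} = 1 ∧
    (∫⁻ t, ENNReal.ofReal (t ^ ((1 : ℝ) / (4 * d))) ∂μT = ⊤) ∧
    (∫⁻ t, ENNReal.ofReal (t ^ ((1 : ℝ) / (8 * d))) ∂μT < ⊤) ∧
    Pr.map (fun ω => ((ω 0).1 : Dir d → ℝ)) = (μT.prod (uniformDir d)).map (pexpl d ε)
/-- Condition `(E')_1` of Bouchet–Ramírez–Sabot: there exist positive weights `φ(e)` with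
`2 Σ_e φ(e) - sup_e (φ(e)+φ(-e)) > 1` and
`𝐄[Π_{e'≠e} p^ω(0,e')^{-φ(e')}] < ∞` for every `e`. -/
def CondE'1 {d : ℕ} (Pr : Measure (Env d)) : Prop :=
  ∃ φ : Dir d → ℝ, (∀ e, 0 < φ e) ∧
    (1 < 2 * ∑ e, φ e - ⨆ e : Dir d, (φ e + φ (e.1, !e.2))) ∧
    ∀ e : Dir d,
      ∫⁻ ω, ∏ e' ∈ Finset.univ.erase e, (ENNReal.ofReal (pmf ω 0 e')) ^ (-(φ e')) ∂Pr < ⊤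
lemma pexpl_moment_top {d : ℕ} (hd : 2 ≤ d) (Pr : Measure (Env d)) (ε : ℝ)
    (hPr : IsPexpl Pr ε) (e₀ : Dir d) (c : ℝ) (hc : 1 / (4 * (d : ℝ)) ≤ c) :
    ∫⁻ ω, (ENNReal.ofReal (pmf ω 0 e₀)) ^ (-c) ∂Pr = ⊤ := by
  obtain ⟨hIID, μT, hμTprob, hμT1, hTinf, hTfin, hmap⟩ := hPr
  set g : (Dir d → ℝ) → ℝ≥0∞ := fun p => (ENNReal.ofReal (p e₀)) ^ (-c) with hgdef
  have hgm : Measurable g := by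
    apply Measurable.pow_const
    exact (measurable_pi_apply e₀).ennreal_ofReal
  have hFm : Measurable (fun ω : Env d => ((ω 0).1 : Dir d → ℝ)) :=
    measurable_subtype_coe.comp (measurable_pi_apply 0)
  have hpm : Measurable (pexpl d ε) := by
    apply measurable_from_prod_countable_left
    intro i
    apply measurable_pi_lambda
    intro e
    unfold pexpl
    simp only
    split_ifs <;> fun_prop
  haveI : IsFiniteMeasure (uniformDir d) := by
    refine ⟨?_⟩
    rw [uniformDir]
    simp only [Measure.smul_apply, Measure.finset_sum_apply, smul_eq_mul,
      Measure.dirac_apply' _ MeasurableSet.univ, Set.indicator_univ, Pi.one_apply,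
      Finset.sum_const, Finset.card_univ, nsmul_eq_mul, mul_one]
    exact ENNReal.mul_lt_top (ENNReal.inv_lt_top.mpr (by simp [Fintype.card_prod]; omega))
      (ENNReal.natCast_lt_top _)
  have h1 : ∫⁻ ω, g ((ω 0).1 : Dir d → ℝ) ∂Pr
      = ∫⁻ ti, g (pexpl d ε ti) ∂(μT.prod (uniformDir d)) := by
    rw [← lintegral_map hgm hFm, hmap, lintegral_map hgm hpm]
  have hgoal : ∫⁻ ω, (ENNReal.ofReal (pmf ω 0 e₀)) ^ (-c) ∂Pr
      = ∫⁻ ω, g ((ω 0).1 : Dir d → ℝ) ∂Pr := rfl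
  rw [hgoal, h1, lintegral_prod (fun ti => g (pexpl d ε ti)) ((hgm.comp hpm).aemeasurable)]
  -- lower bound by restricting the uniform direction to e₀
  set K : ℝ≥0∞ := ((Fintype.card (Dir d) : ℝ≥0∞))⁻¹ with hKdef
  have hK0 : K ≠ 0 := ENNReal.inv_ne_zero.mpr (ENNReal.natCast_ne_top _)
  have hKtop : K ≠ ⊤ := by
    rw [hKdef, Ne, ENNReal.inv_eq_top]
    simp [Fintype.card_prod]
    omega
  have hinner : ∀ t : ℝ, K * g (pexpl d ε (t, e₀))
      ≤ ∫⁻ i, g (pexpl d ε (t, i)) ∂(uniformDir d) := by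
    intro t
    rw [uniformDir, lintegral_smul_measure, lintegral_finset_sum_measure]
    refine mul_le_mul_right ?_ K
    simp_rw [lintegral_dirac]
    exact Finset.single_le_sum (f := fun i => g (pexpl d ε (t, i)))
      (fun i _ => zero_le) (Finset.mem_univ e₀)
  have hdpos : (0 : ℝ) < d := by positivity
  have haet : ∀ᵐ t ∂μT, 2 * (d : ℝ) + 1 ≤ t := by
    rw [ae_iff]
    have hset : {t : ℝ | ¬ (2 * (d : ℝ) + 1 ≤ t)} = (Set.Ici (2 * (d : ℝ) + 1))ᶜ := by
      ext t; simp [Set.mem_Ici]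
    rw [hset, prob_compl_eq_zero_iff measurableSet_Ici]
    exact hμT1
  have hae : ∀ᵐ t ∂μT, K * ENNReal.ofReal (t ^ ((1 : ℝ) / (4 * d)))
      ≤ ∫⁻ i, g (pexpl d ε (t, i)) ∂(uniformDir d) := by
    filter_upwards [haet] with t ht
    refine le_trans (mul_le_mul_right ?_ K) (hinner t)
    have ht0 : (0 : ℝ) < t := by linarith
    have ht1 : (1 : ℝ) ≤ t := by linarith
    have hval : pexpl d ε (t, e₀) e₀ = 1 / t := by simp [pexpl]
    rw [hgdef]
    simp only [hval]
    rw [one_div t, ENNReal.ofReal_inv_of_pos ht0, ENNReal.inv_rpow, ENNReal.rpow_neg,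
      inv_inv, ENNReal.ofReal_rpow_of_pos ht0]
    exact ENNReal.ofReal_le_ofReal (Real.rpow_le_rpow_of_exponent_le ht1 hc)
  refine top_le_iff.mp ?_
  calc (⊤ : ℝ≥0∞) = K * ⊤ := (ENNReal.mul_top hK0).symm
    _ = K * ∫⁻ t, ENNReal.ofReal (t ^ ((1 : ℝ) / (4 * d))) ∂μT := by rw [hTinf]
    _ = ∫⁻ t, K * ENNReal.ofReal (t ^ ((1 : ℝ) / (4 * d))) ∂μT :=
        (lintegral_const_mul' _ _ hKtop).symm
    _ ≤ ∫⁻ t, ∫⁻ i, g (pexpl d ε (t, i)) ∂(uniformDir d) ∂μT := lintegral_mono_ae hae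

/-- The environment `𝐏^expl` with `ε ∈ (1/(2d+1), 2d/(2d+1))` does not
satisfy `(E')_1`: for every family of positive weights `φ` with
`2 Σ_e φ(e) - sup_e (φ(e)+φ(-e)) > 1`, there exists a direction `e₀` with
`𝐄[exp(φ(e₀) log(1/p^ω(0,e₀)))] = 𝐄[p^ω(0,e₀)^{-φ(e₀)}] = ∞`. -/
theorem pexpl_not_condE'1
    (d : ℕ) (hd : 2 ≤ d)
    (Pr : Measure (Env d)) (ε : ℝ) (hPr : IsPexpl Pr ε)
    (hε : 1 / (2 * (d : ℝ) + 1) < ε ∧ ε < 2 * d / (2 * (d : ℝ) + 1)) :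
    (∀ φ : Dir d → ℝ, (∀ e, 0 < φ e) →
      (1 < 2 * ∑ e, φ e - ⨆ e : Dir d, (φ e + φ (e.1, !e.2))) →
      ∃ e₀ : Dir d, ∫⁻ ω, (ENNReal.ofReal (pmf ω 0 e₀)) ^ (-(φ e₀)) ∂Pr = ⊤) ∧
    ¬ CondE'1 Pr := by
  have hdpos : (0 : ℝ) < d := by positivity
  have main : ∀ φ : Dir d → ℝ, (∀ e, 0 < φ e) →
      (1 < 2 * ∑ e, φ e - ⨆ e : Dir d, (φ e + φ (e.1, !e.2))) →
      ∃ e₀ : Dir d, ∫⁻ ω, (ENNReal.ofReal (pmf ω 0 e₀)) ^ (-(φ e₀)) ∂Pr = ⊤ := by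
    intro φ hφpos hφsum
    -- find a direction with large weight
    have hbig : ∃ e₀ : Dir d, 1 / (4 * (d : ℝ)) ≤ φ e₀ := by
      by_contra h
      push_neg at h
      set e1 : Dir d := (⟨0, by omega⟩, true) with he1
      have hS : ∑ e, φ e < 1 / 2 := by
        have h2 : ∑ e, φ e < ∑ _e : Dir d, (1 / (4 * (d : ℝ))) :=
          Finset.sum_lt_sum_of_nonempty ⟨e1, Finset.mem_univ e1⟩ (fun e _ => h e)
        have h3 : ∑ _e : Dir d, (1 / (4 * (d : ℝ))) = 1 / 2 := by
          rw [Finset.sum_const, Finset.card_univ, nsmul_eq_mul]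
          simp only [Fintype.card_prod, Fintype.card_fin, Fintype.card_bool]
          field_simp
          push_cast
          ring
        linarith
      have hv : 0 < φ e1 + φ (e1.1, !e1.2) := by
        have := hφpos e1; have := hφpos (e1.1, !e1.2); linarith
      have hsup : φ e1 + φ (e1.1, !e1.2) ≤ ⨆ e : Dir d, (φ e + φ (e.1, !e.2)) :=
        le_ciSup (f := fun e : Dir d => φ e + φ (e.1, !e.2)) (Set.Finite.bddAbove (Set.finite_range _)) e1
      linarith
    obtain ⟨e₀, he₀⟩ := hbig
    exact ⟨e₀, pexpl_moment_top hd Pr ε hPr e₀ (φ e₀) he₀⟩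
  refine ⟨main, ?_⟩
  rintro ⟨φ, hφpos, hφsum, hall⟩
  obtain ⟨e₀, he₀⟩ := main φ hφpos hφsum
  -- pick e ≠ e₀ so that e₀ appears in the product over `univ.erase e`
  set e : Dir d := (e₀.1, !e₀.2) with he
  have hne : e₀ ≠ e := by
    simp [he, Prod.ext_iff]
  have hmem : e₀ ∈ Finset.univ.erase e := Finset.mem_erase.mpr ⟨hne, Finset.mem_univ e₀⟩
  have hfac : ∀ ω : Env d, ∀ e' : Dir d,
      (1 : ℝ≥0∞) ≤ (ENNReal.ofReal (pmf ω 0 e')) ^ (-(φ e')) := by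
    intro ω e'
    have hle1 : pmf ω 0 e' ≤ 1 := by
      have hsum1 := (ω 0).2.2
      have hnn := (ω 0).2.1
      calc pmf ω 0 e' = (ω 0).1 e' := rfl
        _ ≤ ∑ e'', (ω 0).1 e'' :=
            Finset.single_le_sum (fun i _ => hnn i) (Finset.mem_univ e')
        _ = 1 := hsum1
    have hx : ENNReal.ofReal (pmf ω 0 e') ≤ 1 := ENNReal.ofReal_le_one.mpr hle1
    rw [ENNReal.rpow_neg, ENNReal.one_le_inv]
    exact ENNReal.rpow_le_one hx (le_of_lt (hφpos e'))
  have hmono : ∫⁻ ω, (ENNReal.ofReal (pmf ω 0 e₀)) ^ (-(φ e₀)) ∂Pr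
      ≤ ∫⁻ ω, ∏ e' ∈ Finset.univ.erase e, (ENNReal.ofReal (pmf ω 0 e')) ^ (-(φ e')) ∂Pr := by
    apply lintegral_mono
    intro ω
    exact Finset.single_le_prod' (fun i _ => hfac ω i) hmem
  exact (hall e).ne (top_le_iff.mp (he₀ ▸ hmono))

end RWRE
end
end

section
/- Let d ≥ 2, let v̂ ∈ S^{d−1} and let e_{i_0} be a canonical unit vector with v̂·e_{i_0} ≥ 1/√d. Let β > 0 and L > 0 and let x_1, x_2 ∈ ℤ^d be such that (x_1 − x_2)·v̂ ≥ 0 and x_2 ∈ B_{β,L}(x_1). Then ‖x_1 − x_2‖_∞ ≤ (1 + √d) L^β. -/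
open Filter Topology

/-- Let `v̂ ∈ S^{d-1}` and `e_{i₀}` a canonical unit vector with
`v̂·e_{i₀} ≥ 1/√d`. Writing `P(z) = (z·e_{i₀}/(v̂·e_{i₀})) v̂` for the projection of `z` on
`v̂` along the hyperplane `{x·e_{i₀} = 0}` and `Q(z) = z - P(z)`, the tilted box is
`B_{β,L}(x) = {y ∈ ℤ^d : -L^β < (y-x)·e_{i₀} < L, ‖Q(y-x)‖_∞ < L^β}`. If
`(x₁-x₂)·v̂ ≥ 0` and `x₂ ∈ B_{β,L}(x₁)` then `‖x₁-x₂‖_∞ ≤ (1+√d)L^β`. -/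
theorem tilted_box_geometry
    (d : ℕ) (hd : 2 ≤ d)
    (vhat : Fin d → ℝ) (hv : ∑ i, vhat i ^ 2 = 1)
    (i₀ : Fin d) (hvi : 1 / Real.sqrt d ≤ vhat i₀)
    (β L : ℝ) (hβ : 0 < β) (hL : 0 < L)
    (x₁ x₂ : Fin d → ℤ)
    (hdot : 0 ≤ ∑ i, ((x₁ i - x₂ i : ℤ) : ℝ) * vhat i)
    (hbox₁ : -(L ^ β) < ((x₂ i₀ - x₁ i₀ : ℤ) : ℝ) ∧ ((x₂ i₀ - x₁ i₀ : ℤ) : ℝ) < L)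
    (hbox₂ : ∀ i : Fin d,
      |((x₂ i - x₁ i : ℤ) : ℝ) - ((x₂ i₀ - x₁ i₀ : ℤ) : ℝ) / vhat i₀ * vhat i| < L ^ β) :
    ∀ i : Fin d, |((x₁ i - x₂ i : ℤ) : ℝ)| ≤ (1 + Real.sqrt d) * L ^ β := by
  intro i
  set Lb : ℝ := L ^ β with hLbdef
  have hLb0 : 0 < Lb := Real.rpow_pos_of_pos hL β
  have hd0 : (0:ℝ) < d := by positivity
  have hsd : 0 < Real.sqrt d := Real.sqrt_pos.mpr hd0
  set z : Fin d → ℝ := fun j => ((x₂ j - x₁ j : ℤ) : ℝ) with hzdef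
  have hvi0 : 0 < vhat i₀ := lt_of_lt_of_le (by positivity) hvi
  set c : ℝ := z i₀ / vhat i₀ with hcdef
  set q : Fin d → ℝ := fun j => z j - c * vhat j with hqdef
  have hqb : ∀ j, |q j| < Lb := fun j => hbox₂ j
  -- the sum z·v is ≤ 0
  have hzv : ∑ j, z j * vhat j ≤ 0 := by
    have : ∑ j, z j * vhat j = -∑ j, ((x₁ j - x₂ j : ℤ) : ℝ) * vhat j := by
      rw [← Finset.sum_neg_distrib]
      refine Finset.sum_congr rfl fun j _ => ?_
      simp only [hzdef]
      push_cast
      ring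
    rw [this]
    linarith
  -- decompose
  have hdecomp : ∑ j, z j * vhat j = (∑ j, q j * vhat j) + c := by
    have : ∀ j, q j * vhat j = z j * vhat j - c * vhat j ^ 2 := by
      intro j; simp only [hqdef]; ring
    rw [Finset.sum_congr rfl fun j _ => this j, Finset.sum_sub_distrib,
      ← Finset.mul_sum, hv]
    ring
  -- Cauchy-Schwarz bound on ∑ q v
  have hqs : ∑ j, q j ^ 2 ≤ d * Lb ^ 2 := by
    calc ∑ j, q j ^ 2 ≤ ∑ _j : Fin d, Lb ^ 2 := by
          refine Finset.sum_le_sum fun j _ => ?_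
          have := (hqb j).le
          calc q j ^ 2 = |q j| ^ 2 := (sq_abs _).symm
          _ ≤ Lb ^ 2 := by nlinarith [abs_nonneg (q j)]
      _ = d * Lb ^ 2 := by simp [Finset.card_univ]
  have hcs : (∑ j, q j * vhat j) ^ 2 ≤ d * Lb ^ 2 := by
    calc (∑ j, q j * vhat j) ^ 2 ≤ (∑ j, q j ^ 2) * ∑ j, vhat j ^ 2 :=
          Finset.sum_mul_sq_le_sq_mul_sq _ _ _
      _ = ∑ j, q j ^ 2 := by rw [hv, mul_one]
      _ ≤ d * Lb ^ 2 := hqs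
  have habsqv : |∑ j, q j * vhat j| ≤ Real.sqrt d * Lb := by
    have h1 : (∑ j, q j * vhat j) ^ 2 ≤ (Real.sqrt d * Lb) ^ 2 := by
      rwa [mul_pow, Real.sq_sqrt hd0.le]
    have := Real.sqrt_le_sqrt h1
    rwa [Real.sqrt_sq_eq_abs, Real.sqrt_sq (by positivity)] at this
  -- hence c ≤ √d Lb
  have hc : c ≤ Real.sqrt d * Lb := by
    have h2 : c ≤ -(∑ j, q j * vhat j) := by linarith [hdecomp ▸ hzv]
    have h3 : -(∑ j, q j * vhat j) ≤ |∑ j, q j * vhat j| := neg_le_abs _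
    linarith
  -- bound on |z i₀|
  have hzi0 : |z i₀| ≤ Real.sqrt d * vhat i₀ * Lb := by
    rcases le_or_gt 0 (z i₀) with h | h
    · have : z i₀ = c * vhat i₀ := by
        rw [hcdef, div_mul_cancel₀ _ hvi0.ne']
      rw [abs_of_nonneg h, this]
      have := mul_le_mul_of_nonneg_right hc hvi0.le
      nlinarith
    · have h1 : |z i₀| < Lb := by
        rw [abs_of_neg h]
        have := hbox₁.1
        simp only [hzdef]; linarith
      have h2 : (1:ℝ) ≤ Real.sqrt d * vhat i₀ := by
        have := mul_le_mul_of_nonneg_left hvi hsd.le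
        rwa [mul_one_div, div_self hsd.ne'] at this
      nlinarith
  have hcabs : |c| ≤ Real.sqrt d * Lb := by
    rw [hcdef, abs_div, abs_of_pos hvi0, div_le_iff₀ hvi0]
    calc |z i₀| ≤ Real.sqrt d * vhat i₀ * Lb := hzi0
      _ = Real.sqrt d * Lb * vhat i₀ := by ring
  -- |vhat i| ≤ 1
  have hvb : |vhat i| ≤ 1 := by
    have h1 : vhat i ^ 2 ≤ 1 := by
      rw [← hv]
      exact Finset.single_le_sum (fun j _ => sq_nonneg (vhat j)) (Finset.mem_univ i)
    nlinarith [sq_abs (vhat i), abs_nonneg (vhat i)]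
  -- conclude
  have hzi : |z i| ≤ (1 + Real.sqrt d) * Lb := by
    have h1 : z i = q i + c * vhat i := by simp [hqdef]
    calc |z i| ≤ |q i| + |c * vhat i| := h1 ▸ abs_add_le _ _
      _ ≤ Lb + Real.sqrt d * Lb * 1 := by
          refine add_le_add (hqb i).le ?_
          rw [abs_mul]
          exact mul_le_mul hcabs hvb (abs_nonneg _) (by positivity)
      _ = (1 + Real.sqrt d) * Lb := by ring
  have : ((x₁ i - x₂ i : ℤ) : ℝ) = -(z i) := by simp only [hzdef]; push_cast; ring
  rw [this, abs_neg]
  exact hzi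
end
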